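/- Let a, b > 0 and 0 < p < min(a/b, b/a). For α', β' ∈ (0,1) define φ(a,b,α) = a·α + b·p(1-α)/(α + p(1-α)). If a', b' > 0 satisfy a/b ≠ a'/b' and p < min(a'/b', b'/a'), then φ(a', b', α(a,b)) > φ(a', b', α(a',b')), where α(x,y) = (√(p·y/x) - p)/(1-p). -/

import Mathlib

noncomputable def phi (a b p α : ℝ) : ℝ := a * α + b * (p * (1 - α) / (α + p * (1 - α)))

noncomputable def alphaOpt (p x y : ℝ) : ℝ := (Real.sqrt (p * y / x) - p) / (1 - p)

lemma phi_at (a' b' p s : ℝ) (hs : 0 < s) (hp1 : p < 1) :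
    phi a' b' p ((s - p) / (1 - p)) =
      (a' * s + b' * p / s - a' * p - b' * p) / (1 - p) := by
  have h1 : (1 : ℝ) - p ≠ 0 := by linarith
  have hden : (s - p) / (1 - p) + p * (1 - (s - p) / (1 - p)) = s := by
    field_simp
    ring
  unfold phi
  rw [hden]
  field_simp
  ring

theorem wrong_optimizer_strict (a b a' b' p : ℝ) (ha : 0 < a) (hb : 0 < b)
    (ha' : 0 < a') (hb' : 0 < b') (hp : 0 < p) (hp1 : p < 1)
    (hpab : p < a / b) (hpba : p < b / a)
    (hpab' : p < a' / b') (hpba' : p < b' / a')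
    (hne : a / b ≠ a' / b') :
    phi a' b' p (alphaOpt p a b) > phi a' b' p (alphaOpt p a' b') := by
  set s := Real.sqrt (p * b / a) with hsdef
  set s' := Real.sqrt (p * b' / a') with hs'def
  have harg : 0 < p * b / a := by positivity
  have harg' : 0 < p * b' / a' := by positivity
  have hs : 0 < s := Real.sqrt_pos.mpr harg
  have hs' : 0 < s' := Real.sqrt_pos.mpr harg'
  have hs2 : s ^ 2 = p * b / a := Real.sq_sqrt harg.le
  have hs'2 : s' ^ 2 = p * b' / a' := Real.sq_sqrt harg'.le
  have hsne : s ≠ s' := by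
    intro h
    apply hne
    have : p * b / a = p * b' / a' := by rw [← hs2, ← hs'2, h]
    have hba : b / a = b' / a' := by
      field_simp at this ⊢
      nlinarith
    field_simp at hba ⊢
    nlinarith
  have e1 : alphaOpt p a b = (s - p) / (1 - p) := rfl
  have e2 : alphaOpt p a' b' = (s' - p) / (1 - p) := rfl
  rw [e1, e2, phi_at a' b' p s hs hp1, phi_at a' b' p s' hs' hp1]
  rw [gt_iff_lt, div_lt_div_iff_of_pos_right (by linarith)]
  have key : a' * s + b' * p / s - (a' * s' + b' * p / s') = a' * (s - s') ^ 2 / s := by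
    have hb'p : b' * p = a' * s' ^ 2 := by
      rw [hs'2]; field_simp
    field_simp [hb'p]
    linear_combination (s' - s) * hb'p
  have hpos : 0 < a' * (s - s') ^ 2 / s := by
    have hd : s - s' ≠ 0 := sub_ne_zero.mpr hsne
    have : (s - s') ^ 2 > 0 := by positivity
    positivity
  linarith [key]
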